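/- arXiv:1212.3378 — 2 statements merged into one kernel-verified Lean document; each statement's English description precedes it below -/
import Mathlib

section
/- Let G be a finite group with unitary representation U on H, and let ρ be a perfectly asymmetric state (distinct orbit elements U(g)ρU(g)† are mutually orthogonal). Then there exists a G-covariant channel Φ : L(H) → L(H⊗H) — meaning Φ(U(g)XU(g)†) = (U(g)⊗U(g))Φ(X)(U(g)⊗U(g))† for all g and X — such that Φ(U(g)ρU(g)†) = U(g)ρU(g)† ⊗ U(g)ρU(g)† for all g ∈ G. (A perfectly asymmetric state can be cloned by symmetric processing.) -/
open Matrix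
open scoped ComplexOrder Kronecker

/-- The extension `Φ ⊗ id_d` of a linear map on matrices to matrices over a
`d`-dimensional ancilla. -/
noncomputable def matExtend {n m : Type*} [Fintype n] [DecidableEq n]
    [Fintype m] [DecidableEq m]
    (Φ : Matrix n n ℂ →ₗ[ℂ] Matrix m m ℂ) (d : ℕ)
    (X : Matrix (n × Fin d) (n × Fin d) ℂ) : Matrix (m × Fin d) (m × Fin d) ℂ :=
  Matrix.of fun p q => Φ (Matrix.of fun i j => X (i, p.2) (j, q.2)) p.1 q.1

/-- Complete positivity and trace preservation. -/
def IsCPTP {n m : Type*} [Fintype n] [DecidableEq n] [Fintype m] [DecidableEq m]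
    (Φ : Matrix n n ℂ →ₗ[ℂ] Matrix m m ℂ) : Prop :=
  (∀ (d : ℕ) (X : Matrix (n × Fin d) (n × Fin d) ℂ),
      X.PosSemidef → (matExtend Φ d X).PosSemidef) ∧
  (∀ X : Matrix n n ℂ, (Φ X).trace = X.trace)

open Polynomial

set_option linter.unusedSectionVars false


section Aux

variable {n m : Type*} [Fintype n] [DecidableEq n] [Fintype m] [DecidableEq m]

lemma kron_conjTranspose {l o : Type*} [Fintype l] [Fintype o]
    (A : Matrix l n ℂ) (B : Matrix o m ℂ) : (A ⊗ₖ B)ᴴ = Aᴴ ⊗ₖ Bᴴ := by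
  ext ⟨i, j⟩ ⟨k, l'⟩
  simp [conjTranspose_apply, kroneckerMap_apply]

lemma posSemidef_kron {A : Matrix n n ℂ} {B : Matrix m m ℂ}
    (hA : A.PosSemidef) (hB : B.PosSemidef) : (A ⊗ₖ B).PosSemidef := by
  exact hA.kronecker hB

lemma posSemidef_smul {A : Matrix n n ℂ} (hA : A.PosSemidef) {c : ℂ} (hc : 0 ≤ c) :
    (c • A).PosSemidef := by
  constructor
  · have hcs : star c = c := by
      rw [Complex.star_def, Complex.conj_eq_iff_im]
      exact ((Complex.nonneg_iff).mp hc).2.symm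
    unfold Matrix.IsHermitian
    rw [conjTranspose_smul, hcs, hA.1]
  · exact (hA.smul hc).2

lemma posSemidef_sum {ι : Type*} (s : Finset ι) (f : ι → Matrix n n ℂ)
    (h : ∀ i ∈ s, (f i).PosSemidef) : (∑ i ∈ s, f i).PosSemidef := by
  classical
  induction s using Finset.induction_on with
  | empty => simpa using Matrix.PosSemidef.zero
  | insert _ _ hi ih =>
      rw [Finset.sum_insert hi]
      exact ((h _ (Finset.mem_insert_self _ _)).add
        (ih fun i hi' => h i (Finset.mem_insert_of_mem hi')))

end Aux

section Channel

variable {n m : Type*} [Fintype n] [DecidableEq n] [Fintype m] [DecidableEq m]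

/-- Measure-and-prepare channel. -/
noncomputable def mpChannel {ι : Type*} [Fintype ι] (E : ι → Matrix n n ℂ)
    (τ : ι → Matrix m m ℂ) : Matrix n n ℂ →ₗ[ℂ] Matrix m m ℂ where
  toFun X := ∑ i, (E i * X).trace • τ i
  map_add' X Y := by
    simp [mul_add, trace_add, add_smul, Finset.sum_add_distrib]
  map_smul' c X := by
    simp [Matrix.mul_smul, trace_smul, smul_smul, Finset.smul_sum]

lemma mpChannel_apply {ι : Type*} [Fintype ι] (E : ι → Matrix n n ℂ)
    (τ : ι → Matrix m m ℂ) (X : Matrix n n ℂ) :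
    mpChannel E τ X = ∑ i, (E i * X).trace • τ i := rfl

open scoped MatrixOrder in
/-- The `d × d` matrix of partial traces against a POVM element is PSD. -/
lemma traceForm_posSemidef {E : Matrix n n ℂ} (hE : E.PosSemidef)
    {d : Type*} [Fintype d] {X : Matrix (n × d) (n × d) ℂ} (hX : X.PosSemidef) :
    (Matrix.of fun a b : d =>
      (E * Matrix.of fun i j : n => X (i, a) (j, b) : Matrix n n ℂ).trace).PosSemidef := by
  refine Matrix.PosSemidef.of_dotProduct_mulVec_nonneg ?_ ?_
  · ext a b
    simp only [conjTranspose_apply, of_apply, Matrix.trace, Matrix.diag, Matrix.mul_apply,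
      star_sum, star_mul', of_apply]
    rw [Finset.sum_comm]
    refine Finset.sum_congr rfl fun j _ => Finset.sum_congr rfl fun k _ => ?_
    rw [hE.1.apply, hX.1.apply]
  · intro v
    set B := CFC.sqrt E with hB
    have hBB : B * B = E := CFC.sqrt_mul_sqrt_self E hE.nonneg
    have hBh : Bᴴ = B := (CFC.sqrt_nonneg E).posSemidef.1
    have key : star v ⬝ᵥ (Matrix.of fun a b : d =>
        (E * Matrix.of fun i j : n => X (i, a) (j, b) : Matrix n n ℂ).trace) *ᵥ v
        = ∑ l : n, star (fun p : n × d => star (B l p.1) * v p.2) ⬝ᵥ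
            X *ᵥ (fun p : n × d => star (B l p.1) * v p.2) := by
      simp only [dotProduct, mulVec, Pi.star_apply, star_mul', star_star, of_apply,
        Matrix.trace, Matrix.diag, Matrix.mul_apply, ← hBB, Fintype.sum_prod_type]
      have hB' : ∀ u l : n, B u l = star (B l u) := fun u l => by
        rw [← Matrix.conjTranspose_apply, hBh]
      simp_rw [Finset.sum_mul, Finset.mul_sum, ← hB']
      conv_lhs => enter [2, a, 2, b, 2, u]; rw [Finset.sum_comm]
      conv_lhs => enter [2, a, 2, b]; rw [Finset.sum_comm]
      conv_lhs => enter [2, a]; rw [Finset.sum_comm]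
      conv_lhs => rw [Finset.sum_comm]
      refine Finset.sum_congr rfl fun l _ => ?_
      conv_lhs => enter [2, a, 2, b]; rw [Finset.sum_comm]
      conv_lhs => enter [2, a]; rw [Finset.sum_comm]
      conv_lhs => rw [Finset.sum_comm]
      refine Finset.sum_congr rfl fun k _ => ?_
      refine Finset.sum_congr rfl fun a _ => ?_
      conv_lhs => rw [Finset.sum_comm]
      refine Finset.sum_congr rfl fun u _ => Finset.sum_congr rfl fun b _ => ?_
      ring
    rw [key]
    exact Finset.sum_nonneg fun l _ => hX.dotProduct_mulVec_nonneg _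

end Channel


section Spectral

variable {n : Type*} [Fintype n] [DecidableEq n]

/-- Conjugation by a unitary as an algebra homomorphism. -/
noncomputable def conjA (V : Matrix.unitaryGroup n ℂ) :
    Matrix n n ℂ →ₐ[ℂ] Matrix n n ℂ where
  toFun X := (V : Matrix n n ℂ) * X * (V : Matrix n n ℂ)ᴴ
  map_one' := by
    show (V : Matrix n n ℂ) * 1 * (V : Matrix n n ℂ)ᴴ = 1
    rw [mul_one, ← star_eq_conjTranspose]
    exact Matrix.mem_unitaryGroup_iff.mp V.2
  map_mul' X Y := by
    have h : (V : Matrix n n ℂ)ᴴ * (V : Matrix n n ℂ) = 1 := by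
      rw [← star_eq_conjTranspose]; exact Matrix.mem_unitaryGroup_iff'.mp V.2
    symm
    simp only [Matrix.mul_assoc]
    rw [← Matrix.mul_assoc (V : Matrix n n ℂ)ᴴ, h, one_mul]
  map_zero' := by simp
  map_add' X Y := by simp [Matrix.mul_add, Matrix.add_mul]
  commutes' c := by
    have hVV : (V : Matrix n n ℂ) * (V : Matrix n n ℂ)ᴴ = 1 := by
      rw [← star_eq_conjTranspose]; exact Matrix.mem_unitaryGroup_iff.mp V.2
    show (V : Matrix n n ℂ) * algebraMap ℂ (Matrix n n ℂ) c * (V : Matrix n n ℂ)ᴴ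
      = algebraMap ℂ (Matrix n n ℂ) c
    rw [Algebra.algebraMap_eq_smul_one, Matrix.mul_smul, Matrix.smul_mul, mul_one, hVV]

lemma conjA_apply (V : Matrix.unitaryGroup n ℂ) (X : Matrix n n ℂ) :
    conjA V X = (V : Matrix n n ℂ) * X * (V : Matrix n n ℂ)ᴴ := rfl

lemma conjA_trace (V : Matrix.unitaryGroup n ℂ) (X : Matrix n n ℂ) :
    (conjA V X).trace = X.trace := by
  have h : (V : Matrix n n ℂ)ᴴ * (V : Matrix n n ℂ) = 1 := by
    rw [← star_eq_conjTranspose]; exact Matrix.mem_unitaryGroup_iff'.mp V.2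
  rw [conjA_apply, Matrix.trace_mul_cycle, h, one_mul]

lemma conjA_posSemidef (V : Matrix.unitaryGroup n ℂ) {X : Matrix n n ℂ}
    (hX : X.PosSemidef) : (conjA V X).PosSemidef :=
  hX.mul_mul_conjTranspose_same _

lemma conjA_conjTranspose (V : Matrix.unitaryGroup n ℂ) (X : Matrix n n ℂ) :
    (conjA V X)ᴴ = conjA V Xᴴ := by
  simp [conjA_apply, conjTranspose_mul, Matrix.mul_assoc]

lemma aeval_diagonal (dv : n → ℂ) (p : ℂ[X]) :
    Polynomial.aeval (Matrix.diagonal dv) p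
      = Matrix.diagonal fun i => p.eval (dv i) := by
  induction p using Polynomial.induction_on' with
  | add p q hp hq => simp [hp, hq, Matrix.diagonal_add]
  | monomial k a =>
      simp [aeval_monomial, eval_monomial, Matrix.diagonal_pow,
        Matrix.algebraMap_eq_diagonal, Matrix.diagonal_mul_diagonal]

lemma aeval_spectral {A : Matrix n n ℂ} (hA : A.IsHermitian) (p : ℂ[X]) :
    Polynomial.aeval A p = conjA hA.eigenvectorUnitary
      (Matrix.diagonal fun i => p.eval (hA.eigenvalues i : ℂ)) := by
  have h0 : A = conjA hA.eigenvectorUnitary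
      (Matrix.diagonal fun i => (hA.eigenvalues i : ℂ)) := by
    conv_lhs => rw [hA.spectral_theorem]
    rw [conjA_apply, Unitary.conjStarAlgAut_apply, star_eq_conjTranspose]
    rfl
  conv_lhs => rw [h0]
  rw [aeval_algHom_apply, aeval_diagonal]

end Spectral

section CPTP

variable {n m : Type*} [Fintype n] [DecidableEq n] [Fintype m] [DecidableEq m]

theorem mpChannel_isCPTP {ι : Type*} [Fintype ι] (E : ι → Matrix n n ℂ)
    (τ : ι → Matrix m m ℂ) (hE : ∀ i, (E i).PosSemidef) (hEsum : ∑ i, E i = 1)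
    (hτ : ∀ i, (τ i).PosSemidef) (hτtr : ∀ i, (τ i).trace = 1) :
    IsCPTP (mpChannel E τ) := by
  constructor
  · intro d X hX
    have hext : matExtend (mpChannel E τ) d X
        = ∑ i, (τ i) ⊗ₖ (Matrix.of fun a b : Fin d =>
            (E i * Matrix.of fun i' j : n => X (i', a) (j, b) : Matrix n n ℂ).trace) := by
      ext p q
      simp only [matExtend, Matrix.of_apply, mpChannel_apply, Matrix.sum_apply,
        Matrix.smul_apply, kroneckerMap_apply, smul_eq_mul]
      exact Finset.sum_congr rfl fun i _ => mul_comm _ _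
    rw [hext]
    exact posSemidef_sum _ _ fun i _ =>
      posSemidef_kron (hτ i) (traceForm_posSemidef (hE i) hX)
  · intro X
    simp only [mpChannel_apply, Matrix.trace_sum, Matrix.trace_smul, hτtr, smul_eq_mul,
      mul_one]
    rw [← Matrix.trace_sum, ← Finset.sum_mul, hEsum, one_mul]

end CPTP

/-- A perfectly asymmetric state can be cloned by symmetric (G-covariant)
processing. -/
theorem perfectly_asymmetric_state_cloned_covariantly
    {G : Type*} [Group G] [Fintype G]
    {H : Type*} [Fintype H] [DecidableEq H]
    (U : G →* Matrix.unitaryGroup H ℂ)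
    (ρ : Matrix H H ℂ) (hρ : ρ.PosSemidef) (hρtr : ρ.trace = 1)
    (hPA : ∀ g h : G,
      (U g : Matrix H H ℂ) * ρ * (U g : Matrix H H ℂ)ᴴ ≠
        (U h : Matrix H H ℂ) * ρ * (U h : Matrix H H ℂ)ᴴ →
      ((U g : Matrix H H ℂ) * ρ * (U g : Matrix H H ℂ)ᴴ) *
        ((U h : Matrix H H ℂ) * ρ * (U h : Matrix H H ℂ)ᴴ) = 0) :
    ∃ Φ : Matrix H H ℂ →ₗ[ℂ] Matrix (H × H) (H × H) ℂ,
      IsCPTP Φ ∧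
      (∀ (g : G) (X : Matrix H H ℂ),
        Φ ((U g : Matrix H H ℂ) * X * (U g : Matrix H H ℂ)ᴴ) =
          ((U g : Matrix H H ℂ) ⊗ₖ (U g : Matrix H H ℂ)) * Φ X *
            ((U g : Matrix H H ℂ) ⊗ₖ (U g : Matrix H H ℂ))ᴴ) ∧
      (∀ g : G,
        Φ ((U g : Matrix H H ℂ) * ρ * (U g : Matrix H H ℂ)ᴴ) =
          ((U g : Matrix H H ℂ) * ρ * (U g : Matrix H H ℂ)ᴴ) ⊗ₖ
            ((U g : Matrix H H ℂ) * ρ * (U g : Matrix H H ℂ)ᴴ)) := by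
  classical
  set c : G → (Matrix H H ℂ →ₐ[ℂ] Matrix H H ℂ) := fun g => conjA (U g) with hcdef
  have hc_c : ∀ (g h : G) (X : Matrix H H ℂ), c g (c h X) = c (g * h) X := by
    intro g h X
    show (U g : Matrix H H ℂ) * ((U h : Matrix H H ℂ) * X * (U h : Matrix H H ℂ)ᴴ) *
        (U g : Matrix H H ℂ)ᴴ
      = (U (g * h) : Matrix H H ℂ) * X * (U (g * h) : Matrix H H ℂ)ᴴ
    have hUm : (U (g * h) : Matrix H H ℂ) = (U g : Matrix H H ℂ) * (U h : Matrix H H ℂ) := by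
      rw [_root_.map_mul]; rfl
    rw [hUm, conjTranspose_mul]
    simp only [Matrix.mul_assoc]
  have hc_one : ∀ X : Matrix H H ℂ, c 1 X = X := by
    intro X
    show (U 1 : Matrix H H ℂ) * X * (U 1 : Matrix H H ℂ)ᴴ = X
    have h1 : (U 1 : Matrix H H ℂ) = 1 := by rw [_root_.map_one]; rfl
    simp [h1]
  -- the interpolation polynomial
  set sp : Finset ℂ :=
    insert 0 (Finset.image (fun i => (hρ.1.eigenvalues i : ℂ)) Finset.univ) with hsp
  set p : ℂ[X] := Lagrange.interpolate sp id (fun x => if x = 0 then 0 else 1) with hpdef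
  have hInj : Set.InjOn id (sp : Set ℂ) := Function.injective_id.injOn
  have hp0 : p.eval 0 = 0 := by
    have h := Lagrange.eval_interpolate_at_node (r := fun x : ℂ => if x = 0 then 0 else 1)
      hInj (Finset.mem_insert_self 0 _)
    simp only [id_eq] at h
    rw [hpdef, h]
    simp
  have hpeval : ∀ i : H,
      p.eval (hρ.1.eigenvalues i : ℂ) = if (hρ.1.eigenvalues i : ℂ) = 0 then 0 else 1 := by
    intro i
    have hmem : (hρ.1.eigenvalues i : ℂ) ∈ sp :=
      Finset.mem_insert_of_mem (Finset.mem_image_of_mem _ (Finset.mem_univ i))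
    have h := Lagrange.eval_interpolate_at_node
      (r := fun x : ℂ => if x = 0 then 0 else 1) hInj hmem
    simp only [id_eq] at h
    rw [hpdef, h]
  obtain ⟨q, hq⟩ : (Polynomial.X : ℂ[X]) ∣ p :=
    Polynomial.X_dvd_iff.mpr (by rwa [Polynomial.coeff_zero_eq_eval_zero])
  set P : Matrix H H ℂ := Polynomial.aeval ρ p with hPdef
  set e : H → ℂ := fun i => if (hρ.1.eigenvalues i : ℂ) = 0 then 0 else 1 with he
  have hPspec : P = conjA hρ.1.eigenvectorUnitary (Matrix.diagonal e) := by
    rw [hPdef, aeval_spectral]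
    refine congrArg _ (congrArg _ (funext fun i => ?_))
    rw [hpeval i, he]
  have hρspec : ρ = conjA hρ.1.eigenvectorUnitary
      (Matrix.diagonal fun i => (hρ.1.eigenvalues i : ℂ)) := by
    have h := aeval_spectral hρ.1 (Polynomial.X : ℂ[X])
    rw [Polynomial.aeval_X] at h
    simpa using h
  have hPpsd : P.PosSemidef := by
    rw [hPspec]
    refine conjA_posSemidef _ (Matrix.PosSemidef.diagonal ?_)
    intro i
    show (0:ℂ) ≤ e i
    rw [he]
    dsimp only
    by_cases h : (hρ.1.eigenvalues i : ℂ) = 0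
    · rw [if_pos h]
    · rw [if_neg h]
      exact zero_le_one
  have hPρ : P * ρ = ρ := by
    have hkey : conjA hρ.1.eigenvectorUnitary (Matrix.diagonal e) *
        conjA hρ.1.eigenvectorUnitary (Matrix.diagonal fun i => (hρ.1.eigenvalues i : ℂ))
        = conjA hρ.1.eigenvectorUnitary (Matrix.diagonal fun i => (hρ.1.eigenvalues i : ℂ)) := by
      rw [← _root_.map_mul, Matrix.diagonal_mul_diagonal]
      refine congrArg _ (congrArg _ (funext fun i => ?_))
      rw [he]
      dsimp only
      by_cases h : (hρ.1.eigenvalues i : ℂ) = 0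
      · rw [if_pos h, h, mul_zero]
      · rw [if_neg h, one_mul]
    rw [hPspec]
    conv_lhs => enter [2]; rw [hρspec]
    rw [hkey, ← hρspec]
  have hPP : P * P = P := by
    have hkey : conjA hρ.1.eigenvectorUnitary (Matrix.diagonal e) *
        conjA hρ.1.eigenvectorUnitary (Matrix.diagonal e)
        = conjA hρ.1.eigenvectorUnitary (Matrix.diagonal e) := by
      rw [← _root_.map_mul, Matrix.diagonal_mul_diagonal]
      refine congrArg _ (congrArg _ (funext fun i => ?_))
      rw [he]
      dsimp only
      by_cases h : (hρ.1.eigenvalues i : ℂ) = 0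
      · rw [if_pos h, mul_zero]
      · rw [if_neg h, one_mul]
    rw [hPspec]
    exact hkey
  -- the orbit and projections
  set R : G → Matrix H H ℂ := fun g => c g ρ with hRdef
  set Pg : G → Matrix H H ℂ := fun g => c g P with hPgdef
  have hPg_aeval : ∀ g, Pg g = Polynomial.aeval (R g) p :=
    fun g => (Polynomial.aeval_algHom_apply (c g) ρ p).symm
  have hmul0 : ∀ g h : G, R g ≠ R h → R g * R h = 0 := fun g h hne => hPA g h hne
  have haeval_left : ∀ A : Matrix H H ℂ,
      Polynomial.aeval A p = A * Polynomial.aeval A q := by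
    intro A; rw [hq, _root_.map_mul, Polynomial.aeval_X]
  have haeval_right : ∀ A : Matrix H H ℂ,
      Polynomial.aeval A p = Polynomial.aeval A q * A := by
    intro A; rw [hq, mul_comm, _root_.map_mul, Polynomial.aeval_X]
  have hPgR0 : ∀ g h : G, R g ≠ R h → Pg g * R h = 0 := by
    intro g h hne
    rw [hPg_aeval g, haeval_right, Matrix.mul_assoc, hmul0 g h hne, Matrix.mul_zero]
  have hPgPg0 : ∀ g h : G, R g ≠ R h → Pg g * Pg h = 0 := by
    intro g h hne
    rw [hPg_aeval g, hPg_aeval h, haeval_right, haeval_left, Matrix.mul_assoc,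
      ← Matrix.mul_assoc (R g), hmul0 g h hne, Matrix.zero_mul, Matrix.mul_zero]
  have hPgR_eq : ∀ g h : G, R g = R h → Pg g * R h = R h := by
    intro g h heq
    rw [← heq]
    show c g P * c g ρ = c g ρ
    rw [← _root_.map_mul, hPρ]
  have hPg_eq_of : ∀ g h : G, R g = R h → Pg g = Pg h := by
    intro g h heq
    rw [hPg_aeval g, hPg_aeval h, heq]
  have hPgPg_eq : ∀ g : G, Pg g * Pg g = Pg g := by
    intro g
    show c g P * c g P = c g P
    rw [← _root_.map_mul, hPP]
  have hPg_herm : ∀ g : G, (Pg g)ᴴ = Pg g := fun g => (conjA_posSemidef (U g) hPpsd).1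
  have htrR : ∀ g : G, (R g).trace = 1 := by
    intro g
    rw [show (R g).trace = ρ.trace from conjA_trace (U g) ρ, hρtr]
  have htrc : ∀ (g : G) (M : Matrix H H ℂ), (c g M).trace = M.trace :=
    fun g M => conjA_trace (U g) M
  -- stabilizer counting
  set S : Finset G := Finset.univ.filter (fun g => R g = ρ) with hSdef
  set s : ℕ := S.card with hsdef
  have h1S : (1 : G) ∈ S := by
    rw [hSdef, Finset.mem_filter]
    exact ⟨Finset.mem_univ _, hc_one ρ⟩
  have hs_pos : 0 < s := Finset.card_pos.mpr ⟨1, h1S⟩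
  have hsC : (s : ℂ) ≠ 0 := Nat.cast_ne_zero.mpr hs_pos.ne'
  have hc_inj : ∀ (g : G) (X Y : Matrix H H ℂ), c g X = c g Y → X = Y := by
    intro g X Y hXY
    have h2 := congrArg (c g⁻¹) hXY
    rwa [hc_c, hc_c, inv_mul_cancel, hc_one, hc_one] at h2
  have hcount : ∀ g0 : G, (Finset.univ.filter (fun h => R h = R g0)).card = s := by
    intro g0
    rw [hsdef, hSdef]
    apply Finset.card_bij (fun (h : G) _ => g0⁻¹ * h)
    · intro a ha
      simp only [Finset.mem_filter, Finset.mem_univ, true_and] at ha ⊢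
      show c (g0⁻¹ * a) ρ = ρ
      rw [← hc_c]
      show c g0⁻¹ (R a) = ρ
      rw [ha]
      show c g0⁻¹ (c g0 ρ) = ρ
      rw [hc_c, inv_mul_cancel, hc_one]
    · intro a _ b _ hab
      exact mul_left_cancel hab
    · intro b hb
      simp only [Finset.mem_filter, Finset.mem_univ, true_and] at hb
      refine ⟨g0 * b, ?_, by group⟩
      simp only [Finset.mem_filter, Finset.mem_univ, true_and]
      show c (g0 * b) ρ = R g0
      rw [← hc_c]
      show c g0 (R b) = R g0
      rw [hb]
  -- the averaged projection Q
  set Q : Matrix H H ℂ := (s : ℂ)⁻¹ • ∑ g : G, Pg g with hQdef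
  have hPgR_ite : ∀ g h : G, Pg g * R h = if R g = R h then R h else 0 := by
    intro g h
    by_cases hgh : R g = R h
    · rw [if_pos hgh]; exact hPgR_eq g h hgh
    · rw [if_neg hgh]; exact hPgR0 g h hgh
  have hsum_ite : ∀ (h : G) {α : Type _} [AddCommMonoid α] (M : α),
      (∑ g : G, if R g = R h then M else 0) = s • M := by
    intro h α _ M
    rw [← Finset.sum_filter, Finset.sum_const, hcount h]
  have hQρ : ∀ h : G, Q * R h = R h := by
    intro h
    rw [hQdef, Matrix.smul_mul, Finset.sum_mul]
    rw [Finset.sum_congr rfl fun g _ => hPgR_ite g h, hsum_ite h (R h),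
      ← Nat.cast_smul_eq_nsmul ℂ, smul_smul, inv_mul_cancel₀ hsC, one_smul]
  have hQherm : Qᴴ = Q := by
    rw [hQdef, Matrix.conjTranspose_smul, Matrix.conjTranspose_sum]
    rw [Finset.sum_congr rfl fun g _ => hPg_herm g]
    congr 1
    simp
  have hPgQ : ∀ g : G, Pg g * Q = Pg g := by
    intro g
    rw [hQdef, Matrix.mul_smul, Finset.mul_sum]
    have hthis : ∀ h : G, Pg g * Pg h = if R h = R g then Pg g else 0 := by
      intro h
      by_cases hgh : R h = R g
      · rw [if_pos hgh, hPg_eq_of h g hgh, hPgPg_eq g]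
      · rw [if_neg hgh]
        exact hPgPg0 g h (fun hcontr => hgh hcontr.symm)
    rw [Finset.sum_congr rfl fun h _ => hthis h, hsum_ite g (Pg g),
      ← Nat.cast_smul_eq_nsmul ℂ, smul_smul, inv_mul_cancel₀ hsC, one_smul]
  have hQQ : Q * Q = Q := by
    nth_rewrite 1 [hQdef]
    rw [Matrix.smul_mul, Finset.sum_mul, Finset.sum_congr rfl fun g _ => hPgQ g, ← hQdef]
  have hQherm : Qᴴ = Q := by
    nth_rewrite 1 [hQdef]
    rw [Matrix.conjTranspose_smul, Matrix.conjTranspose_sum,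
      Finset.sum_congr rfl fun g _ => hPg_herm g,
      show star ((s:ℂ)⁻¹) = ((s:ℂ)⁻¹) by simp, ← hQdef]
  have h1Qpsd : (1 - Q).PosSemidef := by
    have hherm : (1 - Q)ᴴ = 1 - Q := by
      rw [Matrix.conjTranspose_sub, Matrix.conjTranspose_one, hQherm]
    have hmul : (1 - Q) * (1 - Q) = 1 - Q := by
      rw [Matrix.sub_mul, one_mul, Matrix.mul_sub, mul_one, hQQ]
      abel
    have hsq : (1 - Q) = (1 - Q)ᴴ * (1 - Q) := by rw [hherm, hmul]
    rw [hsq]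
    exact Matrix.posSemidef_conjTranspose_mul_self _
  have hQinv : ∀ h : G, c h Q = Q := by
    intro h
    nth_rewrite 2 [hQdef]
    rw [hQdef, _root_.map_smul, _root_.map_sum]
    congr 1
    rw [Finset.sum_congr rfl fun g _ => hc_c h g P]
    exact Equiv.sum_comp (Equiv.mulLeft h) Pg
  -- the doubled unitaries
  set W : G → Matrix (H × H) (H × H) ℂ :=
    fun g => (U g : Matrix H H ℂ) ⊗ₖ (U g : Matrix H H ℂ) with hWdef
  have hWconj : ∀ (g : G) (M N : Matrix H H ℂ),
      W g * (M ⊗ₖ N) * (W g)ᴴ = (c g M) ⊗ₖ (c g N) := by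
    intro g M N
    rw [hWdef, kron_conjTranspose, ← Matrix.mul_kronecker_mul, ← Matrix.mul_kronecker_mul]
    rfl
  -- nonnegative scalars
  have hsinv_nonneg : (0:ℂ) ≤ (s : ℂ)⁻¹ := by
    rw [show ((s:ℂ))⁻¹ = (((s:ℝ)⁻¹ : ℝ) : ℂ) by push_cast; ring]
    rw [Complex.zero_le_real]
    exact inv_nonneg.mpr (Nat.cast_nonneg _)
  have hGC : ((Fintype.card G : ℂ)) ≠ 0 := Nat.cast_ne_zero.mpr Fintype.card_ne_zero
  have hGinv_nonneg : (0:ℂ) ≤ ((Fintype.card G : ℂ))⁻¹ := by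
    rw [show ((Fintype.card G : ℂ))⁻¹ = ((((Fintype.card G):ℝ)⁻¹ : ℝ) : ℂ) by push_cast; ring]
    rw [Complex.zero_le_real]
    positivity
  -- the channel
  set Efam : Option G → Matrix H H ℂ :=
    fun i => i.elim (1 - Q) (fun g => (s:ℂ)⁻¹ • Pg g) with hEdef
  set τfam : Option G → Matrix (H × H) (H × H) ℂ :=
    fun i => i.elim (((Fintype.card G : ℂ))⁻¹ • ∑ g : G, (R g) ⊗ₖ (R g))
      (fun g => (R g) ⊗ₖ (R g)) with hτdef
  have hRpsd : ∀ g : G, (R g).PosSemidef := fun g => conjA_posSemidef (U g) hρ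
  have hEpsd : ∀ i, (Efam i).PosSemidef := by
    intro i
    cases i with
    | none => exact h1Qpsd
    | some g => exact posSemidef_smul (conjA_posSemidef (U g) hPpsd) hsinv_nonneg
  have hEsum : (∑ i : Option G, Efam i) = 1 := by
    rw [Fintype.sum_option]
    show (1 - Q) + ∑ g : G, (s:ℂ)⁻¹ • Pg g = 1
    rw [← Finset.smul_sum, ← hQdef]
    abel
  have hτpsd : ∀ i, (τfam i).PosSemidef := by
    intro i
    cases i with
    | none =>
        exact posSemidef_smul (posSemidef_sum _ _
          (fun g _ => posSemidef_kron (hRpsd g) (hRpsd g))) hGinv_nonneg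
    | some g => exact posSemidef_kron (hRpsd g) (hRpsd g)
  have hτtr : ∀ i, (τfam i).trace = 1 := by
    intro i
    cases i with
    | none =>
        show (((Fintype.card G : ℂ))⁻¹ • ∑ g : G, (R g) ⊗ₖ (R g)).trace = 1
        rw [Matrix.trace_smul, Matrix.trace_sum]
        rw [Finset.sum_congr rfl fun g _ => by
          rw [Matrix.trace_kronecker, htrR g, mul_one]]
        simp [Finset.card_univ]
    | some g =>
        show ((R g) ⊗ₖ (R g)).trace = 1
        rw [Matrix.trace_kronecker, htrR g, mul_one]
  -- the canonical form of the channel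
  have hΦform : ∀ Y : Matrix H H ℂ,
      mpChannel Efam τfam Y = ((1 - Q) * Y).trace • τfam none
        + ∑ g : G, ((s:ℂ)⁻¹ * (Pg g * Y).trace) • ((R g) ⊗ₖ (R g)) := by
    intro Y
    rw [mpChannel_apply, Fintype.sum_option]
    congr 1
    refine Finset.sum_congr rfl fun g _ => ?_
    show ((((s:ℂ)⁻¹ • Pg g) * Y).trace) • ((R g) ⊗ₖ (R g)) = _
    rw [Matrix.smul_mul, Matrix.trace_smul, smul_eq_mul]
  refine ⟨mpChannel Efam τfam, mpChannel_isCPTP Efam τfam hEpsd hEsum hτpsd hτtr, ?_, ?_⟩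
  · -- covariance
    intro g X
    have hcg1Q : c g (1 - Q) = 1 - Q := by rw [_root_.map_sub, _root_.map_one, hQinv]
    have e1 : ((1 - Q) * (c g X)).trace = ((1 - Q) * X).trace := by
      conv_lhs => rw [← hcg1Q, ← _root_.map_mul]
      exact htrc g _
    have e2 : ∀ k : G, (Pg k * (c g X)).trace = (Pg (g⁻¹ * k) * X).trace := by
      intro k
      have hkey : Pg k = c g (Pg (g⁻¹ * k)) := by
        show Pg k = c g (c (g⁻¹ * k) P)
        rw [hc_c, mul_inv_cancel_left]
      conv_lhs => rw [hkey, ← _root_.map_mul]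
      exact htrc g _
    have e3 : W g * τfam none * (W g)ᴴ = τfam none := by
      show W g * (((Fintype.card G : ℂ))⁻¹ • ∑ k : G, (R k) ⊗ₖ (R k)) * (W g)ᴴ
        = ((Fintype.card G : ℂ))⁻¹ • ∑ k : G, (R k) ⊗ₖ (R k)
      rw [Matrix.mul_smul, Matrix.smul_mul, Finset.mul_sum, Finset.sum_mul]
      congr 1
      rw [Finset.sum_congr rfl fun k _ => hWconj g (R k) (R k),
        Finset.sum_congr rfl fun k _ => by rw [show (c g (R k)) = R (g * k) from hc_c g k ρ]]
      exact Equiv.sum_comp (Equiv.mulLeft g) (fun k => (R k) ⊗ₖ (R k))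
    show mpChannel Efam τfam (c g X) = W g * (mpChannel Efam τfam X) * (W g)ᴴ
    rw [hΦform (c g X), hΦform X, e1]
    rw [Finset.sum_congr rfl fun k _ => by rw [e2 k]]
    rw [Matrix.mul_add, Matrix.add_mul, Matrix.mul_smul, Matrix.smul_mul, e3]
    congr 1
    rw [Finset.mul_sum, Finset.sum_mul]
    have hRHS : ∀ k : G,
        W g * ((((s:ℂ)⁻¹ * (Pg k * X).trace) • ((R k) ⊗ₖ (R k)))) * (W g)ᴴ
          = ((s:ℂ)⁻¹ * (Pg k * X).trace) • ((R (g * k)) ⊗ₖ (R (g * k))) := by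
      intro k
      rw [Matrix.mul_smul, Matrix.smul_mul, hWconj g (R k) (R k),
        show (c g (R k)) = R (g * k) from hc_c g k ρ]
    rw [Finset.sum_congr rfl fun k _ => hRHS k]
    refine (Fintype.sum_equiv (Equiv.mulLeft g) _ _ fun k => ?_).symm
    simp only [Equiv.coe_mulLeft, inv_mul_cancel_left]
  · -- cloning
    intro g
    show mpChannel Efam τfam (R g) = (R g) ⊗ₖ (R g)
    rw [hΦform (R g)]
    have h0 : (1 - Q) * R g = 0 := by
      rw [Matrix.sub_mul, one_mul, hQρ g, sub_self]
    rw [h0, Matrix.trace_zero, zero_smul, zero_add]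
    have hterm : ∀ k : G, ((s:ℂ)⁻¹ * (Pg k * R g).trace) • ((R k) ⊗ₖ (R k))
        = if R k = R g then (s:ℂ)⁻¹ • ((R g) ⊗ₖ (R g)) else 0 := by
      intro k
      by_cases hk : R k = R g
      · rw [if_pos hk, hPgR_ite k g, if_pos hk, htrR g, mul_one, hk]
      · rw [if_neg hk, hPgR_ite k g, if_neg hk, Matrix.trace_zero, mul_zero, zero_smul]
    rw [Finset.sum_congr rfl fun k _ => hterm k, hsum_ite g _,
      ← Nat.cast_smul_eq_nsmul ℂ, smul_smul, mul_inv_cancel₀ hsC, one_smul]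
end

section
/- Let G be a finite group with unitary representations U_a on H_a and U_s on H_s. Suppose ρ_a on H_a is perfectly asymmetric with trivial stabilizer (the |G| states U_a(g)ρ_a U_a(g)† are pairwise distinct and mutually orthogonal). Then for every projective measurement {Π_k} on H_s there exists a POVM {E_k} on H_s⊗H_a with every E_k commuting with U_s(g)⊗U_a(g) for all g, such that Tr(E_k(ρ_s⊗ρ_a)) = Tr(Π_kρ_s) for all states ρ_s and all k. (A perfect reference frame lifts the restriction to symmetric measurements.) -/
open Matrix
open scoped ComplexOrder Kronecker



lemma PRF.kron_conjTranspose {s a : Type*} (A : Matrix s s ℂ) (B : Matrix a a ℂ) :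
    (A ⊗ₖ B)ᴴ = Aᴴ ⊗ₖ Bᴴ := by
  ext ⟨i, j⟩ ⟨k, l⟩
  simp [Matrix.conjTranspose_apply, Matrix.kroneckerMap_apply, star_mul', mul_comm]

lemma PRF.kron_posSemidef {s a : Type*} [Fintype s] [DecidableEq s] [Fintype a] [DecidableEq a]
    {A : Matrix s s ℂ} {B : Matrix a a ℂ} (hA : A.PosSemidef) (hB : B.PosSemidef) :
    (A ⊗ₖ B).PosSemidef := by
  exact hA.kronecker hB

lemma PRF.proj_posSemidef {n : Type*} [Fintype n] {M : Matrix n n ℂ}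
    (h1 : M.IsHermitian) (h2 : M * M = M) : M.PosSemidef := by
  have h : M = Mᴴ * M := by rw [h1.eq, h2]
  rw [h]
  exact Matrix.posSemidef_conjTranspose_mul_self _

lemma PRF.sum_posSemidef {ι n : Type*} [Fintype n] (t : Finset ι) (f : ι → Matrix n n ℂ)
    (h : ∀ i ∈ t, (f i).PosSemidef) : (∑ i ∈ t, f i).PosSemidef :=
  Finset.sum_induction f _ (fun _ _ ha hb => ha.add hb) Matrix.PosSemidef.zero h

lemma PRF.smul_posSemidef {n : Type*} [Fintype n] {M : Matrix n n ℂ} (hM : M.PosSemidef)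
    {r : ℝ} (hr : 0 ≤ r) : ((r : ℂ) • M).PosSemidef := by
  constructor
  · have h : ((r : ℂ) • M)ᴴ = (r : ℂ) • Mᴴ := by
      rw [Matrix.conjTranspose_smul, Complex.star_def, Complex.conj_ofReal]
    rw [Matrix.IsHermitian, h, hM.1.eq]
  · intro x
    exact (hM.smul (Complex.zero_le_real.mpr hr)).2 x

lemma PRF.sum_kron {ι s a : Type*} (t : Finset ι)
    (f : ι → Matrix s s ℂ) (B : Matrix a a ℂ) :
    (∑ i ∈ t, f i) ⊗ₖ B = ∑ i ∈ t, f i ⊗ₖ B := by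
  classical
  induction t using Finset.induction_on with
  | empty => simp [Matrix.zero_kronecker]
  | insert x t hx ih => simp [Finset.sum_insert hx, Matrix.add_kronecker, ih]

lemma PRF.kron_sum {ι s a : Type*} (t : Finset ι)
    (B : Matrix s s ℂ) (f : ι → Matrix a a ℂ) :
    B ⊗ₖ (∑ i ∈ t, f i) = ∑ i ∈ t, B ⊗ₖ f i := by
  classical
  induction t using Finset.induction_on with
  | empty => simp [Matrix.kronecker_zero]
  | insert x t hx ih => simp [Finset.sum_insert hx, Matrix.kronecker_add, ih]


/-- A perfect reference frame lifts the restriction to symmetric measurements: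
if `ρa` is perfectly asymmetric with trivial stabilizer, then every projective
measurement on the system can be simulated by a symmetric POVM on
system⊗ancilla using the resource `ρa`. -/
theorem perfect_reference_frame_lifts_restriction
    {G : Type*} [Group G] [Fintype G]
    {s a κ : Type*} [Fintype s] [DecidableEq s] [Fintype a] [DecidableEq a] [Fintype κ]
    (Us : G →* Matrix.unitaryGroup s ℂ) (Ua : G →* Matrix.unitaryGroup a ℂ)
    (ρa : Matrix a a ℂ) (hρa : ρa.PosSemidef) (hρatr : ρa.trace = 1)
    (hdistinct : ∀ g h : G, g ≠ h →
      (Ua g : Matrix a a ℂ) * ρa * (Ua g : Matrix a a ℂ)ᴴ ≠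
        (Ua h : Matrix a a ℂ) * ρa * (Ua h : Matrix a a ℂ)ᴴ)
    (horth : ∀ g h : G, g ≠ h →
      ((Ua g : Matrix a a ℂ) * ρa * (Ua g : Matrix a a ℂ)ᴴ) *
        ((Ua h : Matrix a a ℂ) * ρa * (Ua h : Matrix a a ℂ)ᴴ) = 0)
    (P : κ → Matrix s s ℂ)
    (hherm : ∀ k, (P k).IsHermitian) (hidem : ∀ k, P k * P k = P k)
    (horthP : ∀ k l, k ≠ l → P k * P l = 0) (hsum : ∑ k, P k = 1) :
    ∃ E : κ → Matrix (s × a) (s × a) ℂ,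
      (∀ k, (E k).PosSemidef) ∧ (∑ k, E k = 1) ∧
      (∀ k (g : G), E k * ((Us g : Matrix s s ℂ) ⊗ₖ (Ua g : Matrix a a ℂ)) =
        ((Us g : Matrix s s ℂ) ⊗ₖ (Ua g : Matrix a a ℂ)) * E k) ∧
      (∀ k, ∀ ρs : Matrix s s ℂ, ρs.PosSemidef → ρs.trace = 1 →
        (E k * (ρs ⊗ₖ ρa)).trace = (P k * ρs).trace) := by
  classical
  have hH : ρa.IsHermitian := hρa.1
  set V : Matrix a a ℂ := (hH.eigenvectorUnitary : Matrix a a ℂ) with hV_def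
  set D : Matrix a a ℂ := Matrix.diagonal (RCLike.ofReal ∘ hH.eigenvalues) with hD_def
  set ind : a → ℂ := fun i => if hH.eigenvalues i = 0 then 0 else 1 with hind_def
  set Q : Matrix a a ℂ := V * Matrix.diagonal ind * Vᴴ with hQ_def
  have hVsV : Vᴴ * V = 1 := by
    simpa [Matrix.star_eq_conjTranspose] using
      Matrix.mem_unitaryGroup_iff'.mp hH.eigenvectorUnitary.2
  have hVVs : V * Vᴴ = 1 := by
    simpa [Matrix.star_eq_conjTranspose] using
      Matrix.mem_unitaryGroup_iff.mp hH.eigenvectorUnitary.2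
  have hspec : ρa = V * D * Vᴴ := by
    have h := hH.spectral_theorem
    simp [Matrix.star_eq_conjTranspose] at h
    rw [hV_def, hD_def]
    exact h
  have sandwich : ∀ W : Matrix a a ℂ, Wᴴ * W = 1 → ∀ X Y : Matrix a a ℂ,
      (W * X * Wᴴ) * (W * Y * Wᴴ) = W * (X * Y) * Wᴴ := by
    intro W hW X Y
    calc (W * X * Wᴴ) * (W * Y * Wᴴ)
        = W * X * ((Wᴴ * W) * (Y * Wᴴ)) := by simp only [mul_assoc]
      _ = W * (X * Y) * Wᴴ := by rw [hW, one_mul]; simp only [mul_assoc]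
  have hdiagmul : Matrix.diagonal ind * D = D := by
    have hfun : (fun i => ind i * (RCLike.ofReal ∘ hH.eigenvalues) i)
        = (RCLike.ofReal ∘ hH.eigenvalues : a → ℂ) := by
      funext i
      by_cases h : hH.eigenvalues i = 0 <;> simp [hind_def, h]
    rw [hD_def, Matrix.diagonal_mul_diagonal, hfun]
  have hQρ : Q * ρa = ρa := by
    conv_lhs => rw [hspec]
    conv_rhs => rw [hspec]
    rw [hQ_def, sandwich V hVsV, hdiagmul]
  have hker : ∀ M : Matrix a a ℂ, ρa * M = 0 → Q * M = 0 := by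
    intro M hM
    rw [hspec] at hM
    have h1 : D * Vᴴ * M = 0 := by
      have h0 := congrArg (fun X => Vᴴ * X) hM
      simpa only [← mul_assoc, hVsV, one_mul, mul_zero] using h0
    rw [mul_assoc] at h1
    have h2 : Matrix.diagonal ind * (Vᴴ * M) = 0 := by
      ext i j
      have hij : (RCLike.ofReal (hH.eigenvalues i) : ℂ) * (Vᴴ * M) i j = 0 := by
        have h3 := congrFun (congrFun h1 i) j
        simpa [hD_def, Matrix.diagonal_mul] using h3
      by_cases h : hH.eigenvalues i = 0
      · simp [hind_def, Matrix.diagonal_mul, h]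
      · have hz : (Vᴴ * M) i j = 0 := by
          have hne : (RCLike.ofReal (hH.eigenvalues i) : ℂ) ≠ 0 := by simpa using h
          exact (mul_eq_zero.mp hij).resolve_left hne
        simp [hind_def, Matrix.diagonal_mul, hz]
    calc Q * M = V * (Matrix.diagonal ind * (Vᴴ * M)) := by
          rw [hQ_def]; simp only [mul_assoc]
      _ = 0 := by rw [h2, mul_zero]
  have hindstar : star ind = ind := by
    funext i
    by_cases h : hH.eigenvalues i = 0 <;> simp [hind_def, h]
  have hQherm : Qᴴ = Q := by
    rw [hQ_def]
    simp only [Matrix.conjTranspose_mul, Matrix.conjTranspose_conjTranspose,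
      Matrix.diagonal_conjTranspose, hindstar, mul_assoc]
  have hQQ : Q * Q = Q := by
    have hfun : (fun i => ind i * ind i) = ind := by
      funext i
      by_cases h : hH.eigenvalues i = 0 <;> simp [hind_def, h]
    rw [hQ_def, sandwich V hVsV, Matrix.diagonal_mul_diagonal, hfun]
  -- ancilla translates
  set v : G → Matrix a a ℂ := fun g => (Ua g : Matrix a a ℂ) with hv_def
  have hv1 : ∀ g, (v g)ᴴ * v g = 1 := fun g => by
    simpa [hv_def, Matrix.star_eq_conjTranspose] using
      Matrix.mem_unitaryGroup_iff'.mp (Ua g).2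
  have hv2 : ∀ g, v g * (v g)ᴴ = 1 := fun g => by
    simpa [hv_def, Matrix.star_eq_conjTranspose] using
      Matrix.mem_unitaryGroup_iff.mp (Ua g).2
  have hvmul : ∀ g h : G, v (g * h) = v g * v h := fun g h => by simp [hv_def]
  have hvone : v 1 = 1 := by simp [hv_def]
  have horth' : ∀ g h : G, g ≠ h → (v g * ρa * (v g)ᴴ) * (v h * ρa * (v h)ᴴ) = 0 := by
    simp only [hv_def]; exact horth
  set Qg : G → Matrix a a ℂ := fun g => v g * Q * (v g)ᴴ with hQg_def
  have hkerg : ∀ (g : G) (M : Matrix a a ℂ), v g * ρa * (v g)ᴴ * M = 0 → Qg g * M = 0 := by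
    intro g M hM
    have h0 : ρa * (v g)ᴴ * M = 0 := by
      have h00 := congrArg (fun X => (v g)ᴴ * X) hM
      simpa only [← mul_assoc, hv1 g, one_mul, mul_zero] using h00
    have h1 : Q * ((v g)ᴴ * M) = 0 := hker _ (by simpa only [mul_assoc] using h0)
    calc Qg g * M = v g * (Q * ((v g)ᴴ * M)) := by simp only [hQg_def]; simp only [mul_assoc]
      _ = 0 := by rw [h1, mul_zero]
  have hQgherm : ∀ g, (Qg g)ᴴ = Qg g := by
    intro g
    simp only [hQg_def, Matrix.conjTranspose_mul, Matrix.conjTranspose_conjTranspose,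
      hQherm, mul_assoc]
  have hQgQg : ∀ g, Qg g * Qg g = Qg g := by
    intro g
    simp only [hQg_def]
    rw [sandwich (v g) (hv1 g), hQQ]
  have horthQ : ∀ g h : G, g ≠ h → Qg g * Qg h = 0 := by
    intro g h hgh
    have ha : Qg h * (v g * ρa * (v g)ᴴ) = 0 := hkerg h _ (horth' h g (Ne.symm hgh))
    have hb : (v g * ρa * (v g)ᴴ) * Qg h = 0 := by
      have hc := congrArg Matrix.conjTranspose ha
      simpa only [Matrix.conjTranspose_mul, Matrix.conjTranspose_conjTranspose, hH.eq,
        hQgherm h, Matrix.conjTranspose_zero, mul_assoc] using hc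
    exact hkerg g _ hb
  have hQg1 : Qg 1 = Q := by simp [hQg_def, hvone]
  have hQgρa : ∀ g : G, g ≠ 1 → Qg g * ρa = 0 := by
    intro g hg
    refine hkerg g ρa ?_
    have := horth' g 1 hg
    simpa [hvone] using this
  set Qt : Matrix a a ℂ := ∑ g : G, Qg g with hQt_def
  have hQtρa : Qt * ρa = ρa := by
    rw [hQt_def, Finset.sum_mul, Fintype.sum_eq_single (1 : G) (fun g hg => hQgρa g hg),
      hQg1, hQρ]
  have hQtherm : Qtᴴ = Qt := by
    rw [hQt_def, Matrix.conjTranspose_sum]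
    exact Finset.sum_congr rfl fun g _ => hQgherm g
  have hQtQt : Qt * Qt = Qt := by
    rw [hQt_def, Finset.sum_mul]
    refine Finset.sum_congr rfl fun g _ => ?_
    rw [Finset.mul_sum, Fintype.sum_eq_single g (fun h hne => horthQ g h (Ne.symm hne)),
      hQgQg g]
  have hvQg : ∀ h g : G, v h * Qg g = Qg (h * g) * v h := by
    intro h g
    simp only [hQg_def]
    calc v h * (v g * Q * (v g)ᴴ)
        = v (h * g) * Q * (v g)ᴴ := by rw [hvmul]; simp only [mul_assoc]
      _ = v (h * g) * Q * ((v g)ᴴ * ((v h)ᴴ * v h)) := by rw [hv1 h, mul_one]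
      _ = v (h * g) * Q * (v (h * g))ᴴ * v h := by
          rw [hvmul, Matrix.conjTranspose_mul]; simp only [mul_assoc]
  have hvQt : ∀ h : G, v h * Qt = Qt * v h := by
    intro h
    rw [hQt_def, Finset.mul_sum, Finset.sum_mul,
      Finset.sum_congr rfl fun g _ => hvQg h g]
    exact Fintype.sum_bijective (fun g => h * g) (Group.mulLeft_bijective h)
      (fun g => Qg (h * g) * v h) (fun g => Qg g * v h) (fun g => rfl)
  have hQgpsd : ∀ g, (Qg g).PosSemidef := fun g => PRF.proj_posSemidef (hQgherm g) (hQgQg g)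
  have h1mQt : (1 - Qt).PosSemidef := by
    refine PRF.proj_posSemidef ?_ ?_
    · show (1 - Qt)ᴴ = 1 - Qt
      rw [Matrix.conjTranspose_sub, Matrix.conjTranspose_one, hQtherm]
    · simp only [mul_sub, sub_mul, one_mul, mul_one, hQtQt]
      abel

  -- system side
  set u : G → Matrix s s ℂ := fun g => (Us g : Matrix s s ℂ) with hu_def
  have hu1 : ∀ g, (u g)ᴴ * u g = 1 := fun g => by
    simpa [hu_def, Matrix.star_eq_conjTranspose] using
      Matrix.mem_unitaryGroup_iff'.mp (Us g).2
  have hu2 : ∀ g, u g * (u g)ᴴ = 1 := fun g => by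
    simpa [hu_def, Matrix.star_eq_conjTranspose] using
      Matrix.mem_unitaryGroup_iff.mp (Us g).2
  have humul : ∀ g h : G, u (g * h) = u g * u h := fun g h => by simp [hu_def]
  have huone : u 1 = 1 := by simp [hu_def]
  have hPpsd : ∀ k, (P k).PosSemidef := fun k => PRF.proj_posSemidef (hherm k) (hidem k)
  set T : κ → G → Matrix s s ℂ := fun k g => u g * P k * (u g)ᴴ with hT_def
  have hTpsd : ∀ k g, (T k g).PosSemidef := by
    intro k g
    simp only [hT_def]
    exact (hPpsd k).mul_mul_conjTranspose_same _
  have hT1 : ∀ k, T k 1 = P k := by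
    intro k
    simp only [hT_def, huone, Matrix.conjTranspose_one, one_mul, mul_one]
  have hsumT : ∀ g, ∑ k, T k g = 1 := by
    intro g
    simp only [hT_def]
    rw [← Finset.sum_mul, ← Finset.mul_sum, hsum, mul_one, hu2 g]
  have huT : ∀ k (h g : G), u h * T k g = T k (h * g) * u h := by
    intro k h g
    simp only [hT_def]
    calc u h * (u g * P k * (u g)ᴴ)
        = u (h * g) * P k * (u g)ᴴ := by rw [humul]; simp only [mul_assoc]
      _ = u (h * g) * P k * ((u g)ᴴ * ((u h)ᴴ * u h)) := by rw [hu1 h, mul_one]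
      _ = u (h * g) * P k * (u (h * g))ᴴ * u h := by
          rw [humul, Matrix.conjTranspose_mul]; simp only [mul_assoc]
  have hcard : ((Fintype.card G : ℂ)) ≠ 0 := Nat.cast_ne_zero.mpr Fintype.card_ne_zero
  set B : κ → Matrix s s ℂ := fun k => ((Fintype.card G : ℂ))⁻¹ • ∑ g, T k g with hB_def
  have hBpsd : ∀ k, (B k).PosSemidef := by
    intro k
    have h1 : (∑ g, T k g).PosSemidef := PRF.sum_posSemidef _ _ fun g _ => hTpsd k g
    have h2 := PRF.smul_posSemidef h1 (r := ((Fintype.card G : ℝ))⁻¹) (by positivity)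
    simpa [hB_def, Complex.ofReal_inv] using h2
  have hsumB : ∑ k, B k = 1 := by
    simp only [hB_def]
    rw [← Finset.smul_sum, Finset.sum_comm]
    have h1 : ∀ g : G, ∑ k, T k g = (1 : Matrix s s ℂ) := fun g => hsumT g
    rw [Finset.sum_congr rfl fun g _ => h1 g, Finset.sum_const, Finset.card_univ,
      ← Nat.cast_smul_eq_nsmul ℂ, smul_smul, inv_mul_cancel₀ hcard, one_smul]
  have huB : ∀ k (h : G), u h * B k = B k * u h := by
    intro k h
    simp only [hB_def]
    rw [mul_smul_comm, smul_mul_assoc]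
    congr 1
    rw [Finset.mul_sum, Finset.sum_mul,
      Finset.sum_congr rfl fun g _ => huT k h g]
    exact Fintype.sum_bijective (fun g => h * g) (Group.mulLeft_bijective h)
      (fun g => T k (h * g) * u h) (fun g => T k g * u h) (fun g => rfl)
  -- assemble
  refine ⟨fun k => (∑ g, T k g ⊗ₖ Qg g) + B k ⊗ₖ (1 - Qt), ?_, ?_, ?_, ?_⟩
  · intro k
    exact Matrix.PosSemidef.add
      (PRF.sum_posSemidef _ _ fun g _ => PRF.kron_posSemidef (hTpsd k g) (hQgpsd g))
      (PRF.kron_posSemidef (hBpsd k) h1mQt)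
  · rw [Finset.sum_add_distrib]
    have e1 : ∑ k, ∑ g, T k g ⊗ₖ Qg g = (1 : Matrix s s ℂ) ⊗ₖ Qt := by
      rw [Finset.sum_comm]
      have h1 : ∀ g : G, ∑ k, T k g ⊗ₖ Qg g = (1 : Matrix s s ℂ) ⊗ₖ Qg g := by
        intro g
        rw [← PRF.sum_kron, hsumT g]
      rw [Finset.sum_congr rfl fun g _ => h1 g, hQt_def, ← PRF.kron_sum]
    have e2 : ∑ k, B k ⊗ₖ (1 - Qt) = (1 : Matrix s s ℂ) ⊗ₖ (1 - Qt) := by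
      rw [← PRF.sum_kron, hsumB]
    rw [e1, e2, ← Matrix.kronecker_add, show Qt + (1 - Qt) = 1 from by abel,
      Matrix.one_kronecker_one]
  · intro k g
    have key : (u g ⊗ₖ v g) * ((∑ h, T k h ⊗ₖ Qg h) + B k ⊗ₖ (1 - Qt))
        = ((∑ h, T k h ⊗ₖ Qg h) + B k ⊗ₖ (1 - Qt)) * (u g ⊗ₖ v g) := by
      rw [mul_add, add_mul, Finset.mul_sum, Finset.sum_mul]
      congr 1
      · have term : ∀ h : G, (u g ⊗ₖ v g) * (T k h ⊗ₖ Qg h)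
            = (T k (g * h) ⊗ₖ Qg (g * h)) * (u g ⊗ₖ v g) := by
          intro h
          rw [← Matrix.mul_kronecker_mul, ← Matrix.mul_kronecker_mul, huT k g h, hvQg g h]
        rw [Finset.sum_congr rfl fun h _ => term h]
        exact Fintype.sum_bijective (fun h => g * h) (Group.mulLeft_bijective g)
          (fun h => (T k (g * h) ⊗ₖ Qg (g * h)) * (u g ⊗ₖ v g))
          (fun h => (T k h ⊗ₖ Qg h) * (u g ⊗ₖ v g)) (fun h => rfl)
      · rw [← Matrix.mul_kronecker_mul, ← Matrix.mul_kronecker_mul, huB k g,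
          show v g * (1 - Qt) = (1 - Qt) * v g from by
            rw [mul_sub, sub_mul, mul_one, one_mul, hvQt g]]
    exact key.symm
  · intro k ρs hρs hρstr
    have rem : (B k ⊗ₖ (1 - Qt)) * (ρs ⊗ₖ ρa) = 0 := by
      rw [← Matrix.mul_kronecker_mul,
        show (1 - Qt) * ρa = 0 from by rw [sub_mul, one_mul, hQtρa, sub_self],
        Matrix.kronecker_zero]
    have expand : ((∑ g, T k g ⊗ₖ Qg g) + B k ⊗ₖ (1 - Qt)) * (ρs ⊗ₖ ρa)
        = ∑ g, (T k g * ρs) ⊗ₖ (Qg g * ρa) := by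
      rw [add_mul, rem, add_zero, Finset.sum_mul]
      exact Finset.sum_congr rfl fun g _ => by rw [← Matrix.mul_kronecker_mul]
    rw [expand, Matrix.trace_sum,
      Fintype.sum_eq_single (1 : G) (fun g hg => by
        rw [hQgρa g hg, Matrix.kronecker_zero, Matrix.trace_zero]),
      hT1 k, hQg1, hQρ, Matrix.trace_kronecker, hρatr, mul_one]
end
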